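/- Coupling identity for Minkowski sums: For finite sets A, B ⊆ ℝ^K, ND(A + B) = ND(ND(A) + ND(B)), where A + B denotes the Minkowski sum {a + b : a ∈ A, b ∈ B}. In particular, to couple two label sets it suffices to retain only their nondominated labels. -/

import Mathlib

open Pointwise

/-- `y` dominates `y'`: componentwise at least as large and not equal. -/
def dominates {K : ℕ} (y y' : Fin K → ℝ) : Prop :=
  (∀ k, y' k ≤ y k) ∧ y ≠ y'

/-- The nondominated subset of `S`. -/
def ND {K : ℕ} (S : Set (Fin K → ℝ)) : Set (Fin K → ℝ) :=
  {y ∈ S | ¬ ∃ y' ∈ S, dominates y' y}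

lemma dominates_iff_lt {K : ℕ} (y y' : Fin K → ℝ) : dominates y y' ↔ y' < y := by
  constructor
  · rintro ⟨h, hne⟩
    exact lt_of_le_of_ne (fun k => h k) (fun h' => hne h'.symm)
  · intro h
    exact ⟨fun k => h.le k, h.ne'⟩

lemma mem_ND_iff {K : ℕ} (S : Set (Fin K → ℝ)) (y : Fin K → ℝ) :
    y ∈ ND S ↔ y ∈ S ∧ ∀ z ∈ S, ¬ y < z := by
  unfold ND
  simp only [Set.mem_sep_iff, dominates_iff_lt]
  push_neg
  rfl

lemma ND_subset {K : ℕ} (S : Set (Fin K → ℝ)) : ND S ⊆ S := fun _ h => h.1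

lemma exists_ND_ge {K : ℕ} {S : Set (Fin K → ℝ)} (hS : S.Finite) {y : Fin K → ℝ}
    (hy : y ∈ S) : ∃ z ∈ ND S, y ≤ z := by
  have hT : ({y' ∈ S | y ≤ y'} : Set (Fin K → ℝ)).Finite := hS.subset (Set.sep_subset S _)
  obtain ⟨z, ⟨hzS, hyz⟩, hmax⟩ :=
    hT.exists_maximalFor id _ ⟨y, hy, le_refl y⟩
  refine ⟨z, (mem_ND_iff S z).2 ⟨hzS, ?_⟩, hyz⟩
  intro w hw hlt
  exact absurd (hmax (j := w) ⟨hw, hyz.trans hlt.le⟩ hlt.le) hlt.not_ge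

/-- **Coupling identity for Minkowski sums.**  For finite `A, B ⊆ ℝ^K`,
`ND(A + B) = ND(ND(A) + ND(B))`, where `+` is the Minkowski sum. -/
theorem ND_minkowski {K : ℕ} (A B : Set (Fin K → ℝ)) (hA : A.Finite) (hB : B.Finite) :
    ND (A + B) = ND (ND A + ND B) := by
  have hsub : ND A + ND B ⊆ A + B :=
    Set.add_subset_add (ND_subset A) (ND_subset B)
  ext y
  simp only [mem_ND_iff]
  constructor
  · rintro ⟨hy, hmax⟩
    refine ⟨?_, fun z hz => hmax z (hsub hz)⟩
    obtain ⟨a, ha, b, hb, rfl⟩ := hy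
    obtain ⟨a', ha', haa⟩ := exists_ND_ge hA ha
    obtain ⟨b', hb', hbb⟩ := exists_ND_ge hB hb
    have hle : a + b ≤ a' + b' := add_le_add haa hbb
    have hmem : a' + b' ∈ A + B := hsub (Set.add_mem_add ha' hb')
    rcases eq_or_lt_of_le hle with heq | hlt
    · show a + b ∈ ND A + ND B
      rw [heq]; exact Set.add_mem_add ha' hb'
    · exact absurd hlt (hmax _ hmem)
  · rintro ⟨hy, hmax⟩
    refine ⟨hsub hy, fun z hz hlt => ?_⟩
    obtain ⟨a, ha, b, hb, rfl⟩ := hz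
    obtain ⟨a', ha', haa⟩ := exists_ND_ge hA ha
    obtain ⟨b', hb', hbb⟩ := exists_ND_ge hB hb
    have : y < a' + b' := hlt.trans_le (add_le_add haa hbb)
    exact hmax _ (Set.add_mem_add ha' hb') this
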